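/- Let M be a c-by-n random matrix over F_2 whose first row is the all-ones vector and whose j-th row (for j ≥ 2) is chosen uniformly at random subject to having zero dot product with each of the first j−1 rows. Then for any fixed vector v in F_2^n with v ≠ 0 and v ≠ all-ones, the probability that Mv = 0 is at most 2^{−c+1} + 2^{−n+c+1}. -/

import Mathlib

open scoped ENNReal

/-- The standard dot product on `F_2^n`. -/
def f2dot {n : ℕ} (v w : Fin n → ZMod 2) : ZMod 2 := ∑ i, v i * w i

/-- Given a list of previously chosen rows, the next row is uniform among
vectors orthogonal to all of them (this set is nonempty since it contains `0`). -/
noncomputable def rowStep {n : ℕ} (ws : List (Fin n → ZMod 2)) :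
    PMF (Fin n → ZMod 2) :=
  PMF.uniformOfFinset
    (Finset.univ.filter (fun w => ∀ v ∈ ws, f2dot w v = 0))
    ⟨0, Finset.mem_filter.mpr ⟨Finset.mem_univ _, fun v _ => by simp [f2dot]⟩⟩

/-- The random ensemble of self-orthogonal matrices, presented as the list of
rows: the first row is the all-ones vector, and each subsequent row is chosen
uniformly subject to being orthogonal to all previous rows.  `rowEnsemble n j`
produces `j + 1` rows. -/
noncomputable def rowEnsemble (n : ℕ) : ℕ → PMF (List (Fin n → ZMod 2))
  | 0 => PMF.pure [fun _ => 1]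
  | j + 1 => (rowEnsemble n j).bind
      (fun ws => (rowStep ws).map (fun w => ws ++ [w]))

/-! ### auxiliary lemmas -/

lemma f2dot_add_left {n : ℕ} (x y v : Fin n → ZMod 2) :
    f2dot (x + y) v = f2dot x v + f2dot y v := by
  simp [f2dot, add_mul, Finset.sum_add_distrib]

/-- `f2dot w ·` as a linear map. -/
def f2dotL {n : ℕ} (w : Fin n → ZMod 2) : (Fin n → ZMod 2) →ₗ[ZMod 2] ZMod 2 where
  toFun v := f2dot w v
  map_add' x y := by simp [f2dot, mul_add, Finset.sum_add_distrib]
  map_smul' c x := by simp [f2dot, Finset.mul_sum, mul_left_comm]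

lemma f2dot_eq_zero_of_mem_span {n : ℕ} {w v : Fin n → ZMod 2}
    {s : Set (Fin n → ZMod 2)} (hv : v ∈ Submodule.span (ZMod 2) s)
    (hw : ∀ u ∈ s, f2dot w u = 0) : f2dot w v = 0 := by
  have : v ∈ LinearMap.ker (f2dotL w) := by
    have h : Submodule.span (ZMod 2) s ≤ LinearMap.ker (f2dotL w) := by
      rw [Submodule.span_le]; intro u hu; exact hw u hu
    exact h hv
  exact LinearMap.mem_ker.mp this

lemma exists_sep {n : ℕ} {v : Fin n → ZMod 2} (ws : List (Fin n → ZMod 2))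
    (hv : v ∉ Submodule.span (ZMod 2) {u | u ∈ ws}) :
    ∃ w0 : Fin n → ZMod 2, (∀ u ∈ ws, f2dot w0 u = 0) ∧ f2dot w0 v = 1 := by
  set p := Submodule.span (ZMod 2) {u | u ∈ ws}
  have hq : (Submodule.Quotient.mk v : (Fin n → ZMod 2) ⧸ p) ≠ 0 := by
    simpa [Submodule.Quotient.mk_eq_zero] using hv
  obtain ⟨φ, hφ⟩ : ∃ φ : Module.Dual (ZMod 2) ((Fin n → ZMod 2) ⧸ p),
      φ (Submodule.Quotient.mk v) ≠ 0 := by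
    by_contra h
    push_neg at h
    exact hq ((Module.forall_dual_apply_eq_zero_iff (ZMod 2) _).mp h)
  set f : (Fin n → ZMod 2) →ₗ[ZMod 2] ZMod 2 := φ.comp (p.mkQ)
  have hf1 : f v ≠ 0 := by simpa [f, Submodule.mkQ_apply] using hφ
  have hf0 : ∀ u ∈ ws, f u = 0 := by
    intro u hu
    have : u ∈ p := Submodule.subset_span hu
    simp [f, Submodule.mkQ_apply, (Submodule.Quotient.mk_eq_zero p).2 this]
  have key : ∀ u : Fin n → ZMod 2, f2dot (fun i => f (Pi.single i 1)) u = f u := by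
    intro u
    rw [f2dot]
    have hu : u = ∑ i, u i • Pi.single i (1 : ZMod 2) := by
      ext j; simp [Pi.single_apply, Finset.sum_apply]
    conv_rhs => rw [hu]
    rw [map_sum]
    congr 1; ext i
    rw [map_smul]; simp [mul_comm]
  refine ⟨fun i => f (Pi.single i 1), ?_, ?_⟩
  · intro u hu; rw [key, hf0 u hu]
  · rw [key]; revert hf1; generalize f v = a; revert a; decide

def orthS {n : ℕ} (ws : List (Fin n → ZMod 2)) : Finset (Fin n → ZMod 2) :=
  Finset.univ.filter (fun w => ∀ u ∈ ws, f2dot w u = 0)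

lemma orthS_add {n : ℕ} {ws : List (Fin n → ZMod 2)} {x y : Fin n → ZMod 2}
    (hx : x ∈ orthS ws) (hy : y ∈ orthS ws) : x + y ∈ orthS ws := by
  simp only [orthS, Finset.mem_filter, Finset.mem_univ, true_and] at *
  intro u hu; rw [f2dot_add_left, hx u hu, hy u hu, add_zero]

lemma half_card {n : ℕ} {ws : List (Fin n → ZMod 2)} {v w0 : Fin n → ZMod 2}
    (hw0 : w0 ∈ orthS ws) (h1 : f2dot w0 v = 1) :
    2 * ((orthS ws).filter (fun x => f2dot x v = 0)).card ≤ (orthS ws).card := by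
  set S := orthS ws
  set F0 := S.filter (fun x => f2dot x v = 0)
  set F1 := S.filter (fun x => f2dot x v = 1)
  have hinj : F0.card ≤ F1.card := by
    apply Finset.card_le_card_of_injOn (fun x => x + w0)
    · intro x hx
      simp only [F0, F1, Finset.mem_coe, Finset.mem_filter] at hx ⊢
      exact ⟨orthS_add hx.1 hw0, by rw [f2dot_add_left, hx.2, h1, zero_add]⟩
    · intro a _ b _ h
      simpa using congrArg (· + w0) h
  have hdisj : Disjoint F0 F1 := by
    rw [Finset.disjoint_left]
    intro x h0 h1'
    simp only [F0, F1, Finset.mem_filter] at h0 h1'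
    rw [h0.2] at h1'
    exact zero_ne_one h1'.2
  have : F0.card + F1.card ≤ S.card := by
    rw [← Finset.card_union_of_disjoint hdisj]
    exact Finset.card_le_card
      (Finset.union_subset (Finset.filter_subset _ _) (Finset.filter_subset _ _))
  omega

lemma orthS_card_lb {n : ℕ} (ws : List (Fin n → ZMod 2)) :
    2 ^ n ≤ 2 ^ ws.length * (orthS ws).card := by
  induction ws with
  | nil =>
      simp [orthS, Finset.filter_true_of_mem]
  | cons u ws ih =>
      have hsub : orthS (u :: ws) = (orthS ws).filter (fun x => f2dot x u = 0) := by
        ext x; simp [orthS, Finset.mem_filter, and_comm, and_left_comm]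
      have key' : (orthS ws).card ≤ 2 * ((orthS ws).filter (fun x => f2dot x u = 0)).card := by
        by_cases hex : ∃ x0 ∈ orthS ws, f2dot x0 u ≠ 0
        · obtain ⟨x0, hx0S, hx0⟩ := hex
          have hx1 : f2dot x0 u = 1 := by revert hx0; generalize f2dot x0 u = a; revert a; decide
          set F0 := (orthS ws).filter (fun x => f2dot x u = 0)
          set F1 := (orthS ws).filter (fun x => ¬ f2dot x u = 0)
          have : F1.card ≤ F0.card := by
            apply Finset.card_le_card_of_injOn (fun x => x + x0)
            · intro x hx
              simp only [F0, F1, Finset.mem_coe, Finset.mem_filter] at hx ⊢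
              have h1 : f2dot x u = 1 := by
                rcases hx with ⟨_, h⟩; revert h; generalize f2dot x u = a; revert a; decide
              exact ⟨orthS_add hx.1 hx0S, by rw [f2dot_add_left, h1, hx1]; decide⟩
            · intro a _ b _ h
              simpa using congrArg (· + x0) h
          have hsplit : F0.card + F1.card = (orthS ws).card :=
            Finset.card_filter_add_card_filter_not (p := fun x => f2dot x u = 0)
          omega
        · push_neg at hex
          have : (orthS ws).filter (fun x => f2dot x u = 0) = orthS ws :=
            Finset.filter_true_of_mem hex
          rw [this]; omega
      have key : (orthS ws).card ≤ 2 * (orthS (u :: ws)).card := by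
        rw [hsub]; exact key'
      calc 2 ^ n ≤ 2 ^ ws.length * (orthS ws).card := ih
        _ ≤ 2 ^ ws.length * (2 * (orthS (u :: ws)).card) := Nat.mul_le_mul_left _ key
        _ = 2 ^ (u :: ws).length * (orthS (u :: ws)).card := by
            simp [List.length_cons, pow_succ]; ring

open Classical in
/-- The number of elements of any finset landing in a shifted copy of the span of `ws`
is at most `2 ^ ws.length`. -/
lemma coset_card {n : ℕ} (ws : List (Fin n → ZMod 2)) (v : Fin n → ZMod 2)
    (T : Finset (Fin n → ZMod 2)) :
    (T.filter (fun w => w - v ∈ Submodule.span (ZMod 2) {u | u ∈ ws})).card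
      ≤ 2 ^ ws.length := by
  classical
  set P := Submodule.span (ZMod 2) {u | u ∈ ws}
  have hft : Fintype ↥P := Fintype.ofFinite _
  have hinj : (T.filter (fun w => w - v ∈ P)).card ≤ (P : Set (Fin n → ZMod 2)).toFinset.card := by
    apply Finset.card_le_card_of_injOn (fun w => w - v)
    · intro w hw
      simp only [Finset.mem_coe, Finset.mem_filter] at hw
      simpa [Set.mem_toFinset] using hw.2
    · intro a _ b _ h
      have := congrArg (· + v) h
      simpa using this
  have hcard : (P : Set (Fin n → ZMod 2)).toFinset.card = Fintype.card ↥P := by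
    simp [Set.toFinset_card]
  have hpow : Fintype.card ↥P = 2 ^ Module.finrank (ZMod 2) ↥P := by
    have := Module.card_eq_pow_finrank (K := ZMod 2) (V := ↥P)
    simpa [ZMod.card] using this
  have hrank : Module.finrank (ZMod 2) ↥P ≤ ws.length := by
    have hset : {u | u ∈ ws} = (↑ws.toFinset : Set (Fin n → ZMod 2)) := by
      ext x; simp
    have hPeq : P = Submodule.span (ZMod 2) (↑ws.toFinset : Set (Fin n → ZMod 2)) := by
      show Submodule.span (ZMod 2) {u | u ∈ ws} = _
      rw [hset]
    have h1 : Module.finrank (ZMod 2) ↥P ≤ ws.toFinset.card := by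
      rw [hPeq]
      have h2 := finrank_span_le_card (R := ZMod 2) (↑ws.toFinset : Set (Fin n → ZMod 2))
      rwa [Finset.toFinset_coe] at h2
    exact h1.trans ws.toFinset_card_le
  calc (T.filter (fun w => w - v ∈ P)).card ≤ Fintype.card ↥P := by rw [← hcard]; exact hinj
    _ = 2 ^ Module.finrank (ZMod 2) ↥P := hpow
    _ ≤ 2 ^ ws.length := Nat.pow_le_pow_right (by norm_num) hrank

lemma span_append {n : ℕ} {ws : List (Fin n → ZMod 2)} {w v : Fin n → ZMod 2}
    (hB' : v ∈ Submodule.span (ZMod 2) {u | u ∈ ws ++ [w]})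
    (hB : v ∉ Submodule.span (ZMod 2) {u | u ∈ ws}) :
    w - v ∈ Submodule.span (ZMod 2) {u | u ∈ ws} := by
  have hset : {u | u ∈ ws ++ [w]} = insert w {u | u ∈ ws} := by
    ext x; simp [List.mem_append, or_comm]
  rw [hset, Submodule.mem_span_insert] at hB'
  obtain ⟨a, z, hz, hv⟩ := hB'
  have ha : a = 0 ∨ a = 1 := by
    have h : ∀ b : ZMod 2, b = 0 ∨ b = 1 := by decide
    exact h a
  rcases ha with rfl | rfl
  · rw [zero_smul, zero_add] at hv
    exact absurd (hv ▸ hz) hB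
  · have : w - v = -z := by rw [hv, one_smul]; abel
    rw [this]
    exact neg_mem hz

lemma pmf_toOM_le_one {α : Type*} (p : PMF α) (s : Set α) : p.toOuterMeasure s ≤ 1 := by
  rw [PMF.toOuterMeasure_apply]
  calc ∑' x, s.indicator p x ≤ ∑' x, p x :=
        ENNReal.tsum_le_tsum (fun x => Set.indicator_le_self s p x)
    _ = 1 := p.tsum_coe

open Classical in
lemma rowStep_toOM {n : ℕ} (ws : List (Fin n → ZMod 2)) (t : Set (Fin n → ZMod 2)) :
    (rowStep ws).toOuterMeasure t
      = ((orthS ws).filter (fun x => x ∈ t)).card / (orthS ws).card := by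
  rw [show rowStep ws = PMF.uniformOfFinset (orthS ws)
        ⟨0, Finset.mem_filter.mpr ⟨Finset.mem_univ _, fun v _ => by simp [f2dot]⟩⟩ from rfl]
  exact PMF.toOuterMeasure_uniformOfFinset_apply _ _

open Classical in
lemma rowStep_toOM' {n : ℕ} (ws : List (Fin n → ZMod 2)) (t : Set (Fin n → ZMod 2))
    (p : (Fin n → ZMod 2) → Prop) [DecidablePred p] (hp : ∀ x, x ∈ t ↔ p x) :
    (rowStep ws).toOuterMeasure t
      = ((orthS ws).filter p).card / (orthS ws).card := by
  rw [rowStep_toOM]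
  have h := Finset.filter_congr (s := orthS ws) (fun x _ => hp x)
  rw [h]

open Classical in
lemma rowStep_half {n : ℕ} {ws : List (Fin n → ZMod 2)} {v : Fin n → ZMod 2}
    (hv : v ∉ Submodule.span (ZMod 2) {u | u ∈ ws}) :
    (rowStep ws).toOuterMeasure {w | f2dot w v = 0} ≤ 2⁻¹ := by
  obtain ⟨w0, hw0, h1⟩ := exists_sep ws hv
  have hw0S : w0 ∈ orthS ws := by
    simp only [orthS, Finset.mem_filter, Finset.mem_univ, true_and]
    exact hw0
  have hhalf := half_card hw0S h1
  rw [rowStep_toOM' ws {w | f2dot w v = 0} (fun x => f2dot x v = 0) (fun x => Iff.rfl)]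
  apply ENNReal.div_le_of_le_mul
  have h2 : ((2 * ((orthS ws).filter (fun x => f2dot x v = 0)).card : ℕ) : ℝ≥0∞)
      ≤ ((orthS ws).card : ℝ≥0∞) := Nat.cast_le.mpr hhalf
  push_cast at h2
  calc (((orthS ws).filter (fun x => f2dot x v = 0)).card : ℝ≥0∞)
      = 2⁻¹ * (2 * ((orthS ws).filter (fun x => f2dot x v = 0)).card) := by
        rw [← mul_assoc, ENNReal.inv_mul_cancel two_ne_zero ENNReal.ofNat_ne_top, one_mul]
    _ ≤ 2⁻¹ * (orthS ws).card := mul_le_mul_right h2 _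
    _ = 2⁻¹ * (orthS ws).card := rfl

open Classical in
lemma rowStep_coset {n : ℕ} (ws : List (Fin n → ZMod 2)) (v : Fin n → ZMod 2) :
    (rowStep ws).toOuterMeasure {w | w - v ∈ Submodule.span (ZMod 2) {u | u ∈ ws}}
      ≤ 2 ^ ws.length * 2 ^ ws.length * ((2 : ℝ≥0∞) ^ n)⁻¹ := by
  rw [rowStep_toOM' ws {w | w - v ∈ Submodule.span (ZMod 2) {u | u ∈ ws}} (fun w => w - v ∈ Submodule.span (ZMod 2) {u | u ∈ ws})
    (fun x => Iff.rfl)]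
  apply ENNReal.div_le_of_le_mul
  have hF := coset_card ws v (orthS ws)
  have hS := orthS_card_lb ws
  have h2n : ((2:ℝ≥0∞) ^ n) ≠ 0 := by positivity
  have h2nt : ((2:ℝ≥0∞) ^ n) ≠ ⊤ := by
    exact ENNReal.pow_ne_top ENNReal.ofNat_ne_top
  have hFc : (((orthS ws).filter (fun w => w - v ∈ Submodule.span (ZMod 2) {u | u ∈ ws})).card : ℝ≥0∞)
      ≤ 2 ^ ws.length := by exact_mod_cast hF
  have hSc : ((2:ℝ≥0∞) ^ n) ≤ 2 ^ ws.length * (orthS ws).card := by exact_mod_cast hS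
  calc (((orthS ws).filter (fun w => w - v ∈ Submodule.span (ZMod 2) {u | u ∈ ws})).card : ℝ≥0∞)
      ≤ 2 ^ ws.length := hFc
    _ = 2 ^ ws.length * ((2 ^ n) * ((2:ℝ≥0∞) ^ n)⁻¹) := by
        rw [ENNReal.mul_inv_cancel h2n h2nt, mul_one]
    _ ≤ 2 ^ ws.length * ((2 ^ ws.length * (orthS ws).card) * ((2:ℝ≥0∞) ^ n)⁻¹) := by
        gcongr
    _ = 2 ^ ws.length * 2 ^ ws.length * ((2:ℝ≥0∞) ^ n)⁻¹ * (orthS ws).card := by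
        ring

lemma rowEnsemble_length (n : ℕ) : ∀ j, ∀ L ∈ (rowEnsemble n j).support, L.length = j + 1 := by
  intro j
  induction j with
  | zero =>
      intro L hL
      simp only [rowEnsemble, PMF.support_pure, Set.mem_singleton_iff] at hL
      subst hL; simp
  | succ j ih =>
      intro L hL
      simp only [rowEnsemble, PMF.mem_support_bind_iff, PMF.mem_support_map_iff] at hL
      obtain ⟨ws, hws, w, hw, rfl⟩ := hL
      simp [ih ws hws]

lemma main_ind (n : ℕ) (v : Fin n → ZMod 2) (hv0 : v ≠ 0) (hv1 : v ≠ fun _ => 1) (j : ℕ) :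
    (rowEnsemble n j).toOuterMeasure
        {L | (∀ w ∈ L, f2dot w v = 0) ∧ v ∉ Submodule.span (ZMod 2) {u | u ∈ L}} ≤ 2⁻¹ ^ j
    ∧ (rowEnsemble n j).toOuterMeasure
        {L | (∀ w ∈ L, f2dot w v = 0) ∧ v ∈ Submodule.span (ZMod 2) {u | u ∈ L}}
      ≤ 2 ^ (j + 2) * ((2 : ℝ≥0∞) ^ n)⁻¹ := by
  induction j with
  | zero =>
      constructor
      · simpa using pmf_toOM_le_one (rowEnsemble n 0) _
      · rw [show rowEnsemble n 0 = PMF.pure [(fun _ => 1 : Fin n → ZMod 2)] from rfl,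
          PMF.toOuterMeasure_pure_apply]
        rw [if_neg]
        · exact zero_le
        · rintro ⟨-, hB⟩
          have hset : {u | u ∈ [(fun _ => 1 : Fin n → ZMod 2)]}
              = {(fun _ => 1 : Fin n → ZMod 2)} := by
            ext x; simp
          rw [hset, Submodule.mem_span_singleton] at hB
          obtain ⟨a, ha⟩ := hB
          have h01 : ∀ b : ZMod 2, b = 0 ∨ b = 1 := by decide
          rcases h01 a with rfl | rfl
          · rw [zero_smul] at ha; exact hv0 ha.symm
          · rw [one_smul] at ha; exact hv1 ha.symm
  | succ j ih =>
      obtain ⟨hp, hq⟩ := ih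
      have hbind : rowEnsemble n (j + 1)
          = (rowEnsemble n j).bind (fun ws => (rowStep ws).map (fun w => ws ++ [w])) := rfl
      constructor
      · -- the `p` part
        rw [hbind, PMF.toOuterMeasure_bind_apply]
        have hterm : ∀ ws, (rowEnsemble n j) ws *
            ((rowStep ws).map (fun w => ws ++ [w])).toOuterMeasure
              {L | (∀ w ∈ L, f2dot w v = 0) ∧ v ∉ Submodule.span (ZMod 2) {u | u ∈ L}}
            ≤ 2⁻¹ * Set.indicator
              {L | (∀ w ∈ L, f2dot w v = 0) ∧ v ∉ Submodule.span (ZMod 2) {u | u ∈ L}}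
              (rowEnsemble n j) ws := by
          intro ws
          rw [PMF.toOuterMeasure_map_apply]
          by_cases hA : ∀ w ∈ ws, f2dot w v = 0
          · by_cases hB : v ∈ Submodule.span (ZMod 2) {u | u ∈ ws}
            · have hempty : ((fun w => ws ++ [w]) ⁻¹'
                  {L | (∀ w ∈ L, f2dot w v = 0) ∧ v ∉ Submodule.span (ZMod 2) {u | u ∈ L}})
                  = (∅ : Set (Fin n → ZMod 2)) := by
                ext w
                simp only [Set.mem_preimage, Set.mem_setOf_eq, Set.mem_empty_iff_false,
                  iff_false, not_and, not_not]
                intro _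
                refine Submodule.span_mono ?_ hB
                intro x hx; simp only [Set.mem_setOf_eq] at *; exact List.mem_append_left _ hx
              rw [hempty]
              simp
            · have hmem : ws ∈ {L | (∀ w ∈ L, f2dot w v = 0) ∧
                  v ∉ Submodule.span (ZMod 2) {u | u ∈ L}} := ⟨hA, hB⟩
              rw [Set.indicator_of_mem hmem]
              rw [mul_comm (2⁻¹)]
              apply mul_le_mul_right
              refine le_trans ((rowStep ws).toOuterMeasure.mono ?_) (rowStep_half hB)
              intro w hw
              simp only [Set.mem_preimage, Set.mem_setOf_eq] at hw
              exact hw.1 w (List.mem_append_right _ (List.mem_singleton_self _))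
          · have hempty : ((fun w => ws ++ [w]) ⁻¹'
                {L | (∀ w ∈ L, f2dot w v = 0) ∧ v ∉ Submodule.span (ZMod 2) {u | u ∈ L}})
                = (∅ : Set (Fin n → ZMod 2)) := by
              ext w
              simp only [Set.mem_preimage, Set.mem_setOf_eq, Set.mem_empty_iff_false, iff_false,
                not_and]
              intro hA'
              exact (hA (fun u hu => hA' u (List.mem_append_left _ hu))).elim
            rw [hempty]
            simp
        calc ∑' ws, (rowEnsemble n j) ws *
              ((rowStep ws).map (fun w => ws ++ [w])).toOuterMeasure
                {L | (∀ w ∈ L, f2dot w v = 0) ∧ v ∉ Submodule.span (ZMod 2) {u | u ∈ L}}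
            ≤ ∑' ws, 2⁻¹ * Set.indicator
              {L | (∀ w ∈ L, f2dot w v = 0) ∧ v ∉ Submodule.span (ZMod 2) {u | u ∈ L}}
              (rowEnsemble n j) ws := ENNReal.tsum_le_tsum hterm
          _ = 2⁻¹ * (rowEnsemble n j).toOuterMeasure
              {L | (∀ w ∈ L, f2dot w v = 0) ∧ v ∉ Submodule.span (ZMod 2) {u | u ∈ L}} := by
              rw [ENNReal.tsum_mul_left, PMF.toOuterMeasure_apply]
          _ ≤ 2⁻¹ * 2⁻¹ ^ j := mul_le_mul_right hp _
          _ = 2⁻¹ ^ (j + 1) := (pow_succ' _ _).symm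
      · -- the `q` part
        rw [hbind, PMF.toOuterMeasure_bind_apply]
        set C : ℝ≥0∞ := 2 ^ (j + 1) * 2 ^ (j + 1) * ((2 : ℝ≥0∞) ^ n)⁻¹ with hC
        have hterm : ∀ ws, (rowEnsemble n j) ws *
            ((rowStep ws).map (fun w => ws ++ [w])).toOuterMeasure
              {L | (∀ w ∈ L, f2dot w v = 0) ∧ v ∈ Submodule.span (ZMod 2) {u | u ∈ L}}
            ≤ Set.indicator
                {L | (∀ w ∈ L, f2dot w v = 0) ∧ v ∈ Submodule.span (ZMod 2) {u | u ∈ L}}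
                (rowEnsemble n j) ws
              + C * Set.indicator
                {L | (∀ w ∈ L, f2dot w v = 0) ∧ v ∉ Submodule.span (ZMod 2) {u | u ∈ L}}
                (rowEnsemble n j) ws := by
          intro ws
          by_cases hz : (rowEnsemble n j) ws = 0
          · rw [hz, zero_mul]; exact zero_le
          have hlen : ws.length = j + 1 :=
            rowEnsemble_length n j ws ((PMF.mem_support_iff _ _).mpr hz)
          rw [PMF.toOuterMeasure_map_apply]
          by_cases hA : ∀ w ∈ ws, f2dot w v = 0
          · by_cases hB : v ∈ Submodule.span (ZMod 2) {u | u ∈ ws}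
            · have hmem : ws ∈ {L | (∀ w ∈ L, f2dot w v = 0) ∧
                  v ∈ Submodule.span (ZMod 2) {u | u ∈ L}} := ⟨hA, hB⟩
              calc (rowEnsemble n j) ws * _ ≤ (rowEnsemble n j) ws * 1 :=
                    mul_le_mul_right (pmf_toOM_le_one _ _) _
                _ = Set.indicator _ (rowEnsemble n j) ws := by
                    rw [mul_one, Set.indicator_of_mem hmem]
                _ ≤ _ := le_add_right le_rfl
            · have hmem : ws ∈ {L | (∀ w ∈ L, f2dot w v = 0) ∧
                  v ∉ Submodule.span (ZMod 2) {u | u ∈ L}} := ⟨hA, hB⟩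
              have hsubset : ((fun w => ws ++ [w]) ⁻¹'
                  {L | (∀ w ∈ L, f2dot w v = 0) ∧ v ∈ Submodule.span (ZMod 2) {u | u ∈ L}})
                  ⊆ {w | w - v ∈ Submodule.span (ZMod 2) {u | u ∈ ws}} := by
                intro w hw
                simp only [Set.mem_preimage, Set.mem_setOf_eq] at hw ⊢
                exact span_append hw.2 hB
              have hbound : ((rowStep ws).toOuterMeasure ((fun w => ws ++ [w]) ⁻¹'
                  {L | (∀ w ∈ L, f2dot w v = 0) ∧ v ∈ Submodule.span (ZMod 2) {u | u ∈ L}}))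
                  ≤ C := by
                refine le_trans ((rowStep ws).toOuterMeasure.mono hsubset) ?_
                have := rowStep_coset ws v
                rwa [hlen] at this
              calc (rowEnsemble n j) ws * _ ≤ (rowEnsemble n j) ws * C :=
                    mul_le_mul_right hbound _
                _ = C * Set.indicator _ (rowEnsemble n j) ws := by
                    rw [Set.indicator_of_mem hmem, mul_comm]
                _ ≤ _ := le_add_left le_rfl
          · have hempty : ((fun w => ws ++ [w]) ⁻¹'
                {L | (∀ w ∈ L, f2dot w v = 0) ∧ v ∈ Submodule.span (ZMod 2) {u | u ∈ L}})
                = (∅ : Set (Fin n → ZMod 2)) := by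
              ext w
              simp only [Set.mem_preimage, Set.mem_setOf_eq, Set.mem_empty_iff_false, iff_false,
                not_and]
              intro hA'
              exact (hA (fun u hu => hA' u (List.mem_append_left _ hu))).elim
            rw [hempty]
            simp
        calc ∑' ws, (rowEnsemble n j) ws *
              ((rowStep ws).map (fun w => ws ++ [w])).toOuterMeasure
                {L | (∀ w ∈ L, f2dot w v = 0) ∧ v ∈ Submodule.span (ZMod 2) {u | u ∈ L}}
            ≤ ∑' ws, (Set.indicator
                {L | (∀ w ∈ L, f2dot w v = 0) ∧ v ∈ Submodule.span (ZMod 2) {u | u ∈ L}}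
                (rowEnsemble n j) ws
              + C * Set.indicator
                {L | (∀ w ∈ L, f2dot w v = 0) ∧ v ∉ Submodule.span (ZMod 2) {u | u ∈ L}}
                (rowEnsemble n j) ws) := ENNReal.tsum_le_tsum hterm
          _ = (rowEnsemble n j).toOuterMeasure
                {L | (∀ w ∈ L, f2dot w v = 0) ∧ v ∈ Submodule.span (ZMod 2) {u | u ∈ L}}
              + C * (rowEnsemble n j).toOuterMeasure
                {L | (∀ w ∈ L, f2dot w v = 0) ∧ v ∉ Submodule.span (ZMod 2) {u | u ∈ L}} := by
              rw [ENNReal.tsum_add, ENNReal.tsum_mul_left, PMF.toOuterMeasure_apply,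
                PMF.toOuterMeasure_apply]
          _ ≤ 2 ^ (j + 2) * ((2 : ℝ≥0∞) ^ n)⁻¹ + C * 2⁻¹ ^ j := by
              exact add_le_add hq (mul_le_mul_right hp _)
          _ ≤ 2 ^ (j + 1 + 2) * ((2 : ℝ≥0∞) ^ n)⁻¹ := by
              have h1 : (2 : ℝ≥0∞) ^ j * 2⁻¹ ^ j = 1 := by
                rw [← mul_pow, ENNReal.mul_inv_cancel two_ne_zero ENNReal.ofNat_ne_top, one_pow]
              have hcancel : (2 : ℝ≥0∞) ^ (j + 1) * 2⁻¹ ^ j = 2 := by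
                calc (2 : ℝ≥0∞) ^ (j + 1) * 2⁻¹ ^ j
                    = 2 * ((2 : ℝ≥0∞) ^ j * 2⁻¹ ^ j) := by rw [pow_succ']; ring
                  _ = 2 := by rw [h1, mul_one]
              have : C * 2⁻¹ ^ j = 2 ^ (j + 2) * ((2 : ℝ≥0∞) ^ n)⁻¹ := by
                rw [hC]
                calc 2 ^ (j + 1) * 2 ^ (j + 1) * ((2 : ℝ≥0∞) ^ n)⁻¹ * 2⁻¹ ^ j
                    = (2 ^ (j + 1) * 2⁻¹ ^ j) * 2 ^ (j + 1) * ((2 : ℝ≥0∞) ^ n)⁻¹ := by ring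
                  _ = 2 * 2 ^ (j + 1) * ((2 : ℝ≥0∞) ^ n)⁻¹ := by rw [hcancel]
                  _ = 2 ^ (j + 2) * ((2 : ℝ≥0∞) ^ n)⁻¹ := by rw [← pow_succ']
              rw [this, ← add_mul, ← two_mul, ← pow_succ']

/-- for a `c`-by-`n` random matrix from the self-orthogonal
ensemble (first row all-ones, `c ≥ 1`), and any fixed `v ≠ 0`, `v ≠ 1⃗`, the
probability that `M v = 0` (i.e. `v` is orthogonal to every row) is at most
`2^{-c+1} + 2^{-n+c+1}`. -/
theorem stmt4 (n c : ℕ) (hc : 1 ≤ c) (v : Fin n → ZMod 2)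
    (hv0 : v ≠ 0) (hv1 : v ≠ fun _ => 1) :
    (rowEnsemble n (c - 1)).toOuterMeasure
        {L | ∀ w ∈ L, f2dot w v = 0}
      ≤ 2 * (2 : ℝ≥0∞)⁻¹ ^ c + 2 * (2 : ℝ≥0∞)⁻¹ ^ (n - c) := by
  by_cases hn : c ≤ n
  · obtain ⟨c', rfl⟩ : ∃ c', c = c' + 1 := ⟨c - 1, by omega⟩
    obtain ⟨hp, hq⟩ := main_ind n v hv0 hv1 (c' + 1 - 1)
    simp only [Nat.add_sub_cancel] at hp hq
    have hsub : {L : List (Fin n → ZMod 2) | ∀ w ∈ L, f2dot w v = 0} ⊆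
        {L | (∀ w ∈ L, f2dot w v = 0) ∧ v ∉ Submodule.span (ZMod 2) {u | u ∈ L}} ∪
        {L | (∀ w ∈ L, f2dot w v = 0) ∧ v ∈ Submodule.span (ZMod 2) {u | u ∈ L}} := by
      intro L hL
      by_cases h : v ∈ Submodule.span (ZMod 2) {u | u ∈ L}
      · exact Or.inr ⟨hL, h⟩
      · exact Or.inl ⟨hL, h⟩
    have hone : 2 * (2 : ℝ≥0∞)⁻¹ ^ (c' + 1) = 2⁻¹ ^ c' := by
      rw [pow_succ', ← mul_assoc, ENNReal.mul_inv_cancel two_ne_zero ENNReal.ofNat_ne_top,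
        one_mul]
    have htwo : (2 : ℝ≥0∞) ^ (c' + 2) * ((2 : ℝ≥0∞) ^ n)⁻¹
        = 2 * (2 : ℝ≥0∞)⁻¹ ^ (n - (c' + 1)) := by
      have hkn : n = (n - (c' + 1)) + (c' + 1) := by omega
      have hpow1 : ((2 : ℝ≥0∞) ^ n)⁻¹ = 2⁻¹ ^ (n - (c' + 1)) * 2⁻¹ ^ (c' + 1) := by
        conv_lhs => rw [hkn, pow_add]
        rw [ENNReal.mul_inv (Or.inl (pow_ne_zero _ two_ne_zero))
          (Or.inl (ENNReal.pow_ne_top ENNReal.ofNat_ne_top)), ENNReal.inv_pow, ENNReal.inv_pow]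
      have hpc : (2 : ℝ≥0∞) ^ (c' + 2) * 2⁻¹ ^ (c' + 1) = 2 := by
        have h1 : (2 : ℝ≥0∞) ^ (c' + 1) * 2⁻¹ ^ (c' + 1) = 1 := by
          rw [← mul_pow, ENNReal.mul_inv_cancel two_ne_zero ENNReal.ofNat_ne_top, one_pow]
        calc (2 : ℝ≥0∞) ^ (c' + 2) * 2⁻¹ ^ (c' + 1)
            = 2 * ((2 : ℝ≥0∞) ^ (c' + 1) * 2⁻¹ ^ (c' + 1)) := by rw [pow_succ']; ring
          _ = 2 := by rw [h1, mul_one]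
      calc (2 : ℝ≥0∞) ^ (c' + 2) * ((2 : ℝ≥0∞) ^ n)⁻¹
          = ((2 : ℝ≥0∞) ^ (c' + 2) * 2⁻¹ ^ (c' + 1)) * 2⁻¹ ^ (n - (c' + 1)) := by
            rw [hpow1]; ring
        _ = 2 * (2 : ℝ≥0∞)⁻¹ ^ (n - (c' + 1)) := by rw [hpc]
    calc (rowEnsemble n (c' + 1 - 1)).toOuterMeasure {L | ∀ w ∈ L, f2dot w v = 0}
        ≤ (rowEnsemble n (c' + 1 - 1)).toOuterMeasure
            ({L | (∀ w ∈ L, f2dot w v = 0) ∧ v ∉ Submodule.span (ZMod 2) {u | u ∈ L}} ∪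
             {L | (∀ w ∈ L, f2dot w v = 0) ∧ v ∈ Submodule.span (ZMod 2) {u | u ∈ L}}) :=
          (rowEnsemble n (c' + 1 - 1)).toOuterMeasure.mono hsub
      _ ≤ (rowEnsemble n (c' + 1 - 1)).toOuterMeasure
            {L | (∀ w ∈ L, f2dot w v = 0) ∧ v ∉ Submodule.span (ZMod 2) {u | u ∈ L}}
          + (rowEnsemble n (c' + 1 - 1)).toOuterMeasure
            {L | (∀ w ∈ L, f2dot w v = 0) ∧ v ∈ Submodule.span (ZMod 2) {u | u ∈ L}} :=
          MeasureTheory.measure_union_le _ _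
      _ ≤ 2⁻¹ ^ c' + 2 ^ (c' + 2) * ((2 : ℝ≥0∞) ^ n)⁻¹ := by
          simp only [Nat.add_sub_cancel]
          exact add_le_add hp hq
      _ = 2 * (2 : ℝ≥0∞)⁻¹ ^ (c' + 1) + 2 * (2 : ℝ≥0∞)⁻¹ ^ (n - (c' + 1)) := by
          rw [hone, htwo]
  · have h0 : n - c = 0 := by omega
    rw [h0]
    calc (rowEnsemble n (c - 1)).toOuterMeasure {L | ∀ w ∈ L, f2dot w v = 0}
        ≤ 1 := pmf_toOM_le_one _ _
      _ ≤ 2 * (2 : ℝ≥0∞)⁻¹ ^ 0 := by norm_num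
      _ ≤ 2 * (2 : ℝ≥0∞)⁻¹ ^ c + 2 * (2 : ℝ≥0∞)⁻¹ ^ 0 := le_add_self
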